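/- arXiv:1711.07429 — 2 statements merged into one kernel-verified Lean document; each statement's English description precedes it below -/
import Mathlib

section
/- Let w be a nonzero complex number and let L₁, L₂ be complex numbers with exp L₁ = w and exp L₂ = w, and let k be the (unique) integer such that L₂ = L₁ + 2πik. Then exp(L₂²/(4πi) − L₂/2) = wᵏ · exp(L₁²/(4πi) − L₁/2). -/
/-- Branch-transformation law of the multivalued function
`φ(w) = exp((log w)²/(4πi) − (log w)/2)`: if `L₁, L₂` are two logarithms of the
nonzero complex number `w`, differing by `2πik`, then
`exp(L₂²/(4πi) − L₂/2) = wᵏ · exp(L₁²/(4πi) − L₁/2)`. -/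
theorem branch_transformation_law (w L₁ L₂ : ℂ) (hw : w ≠ 0)
    (h1 : Complex.exp L₁ = w) (h2 : Complex.exp L₂ = w)
    (k : ℤ) (hk : L₂ = L₁ + 2 * (Real.pi : ℂ) * Complex.I * (k : ℂ)) :
    Complex.exp (L₂ ^ 2 / (4 * (Real.pi : ℂ) * Complex.I) - L₂ / 2) =
      w ^ k * Complex.exp (L₁ ^ 2 / (4 * (Real.pi : ℂ) * Complex.I) - L₁ / 2) := by
  have hπ : (Real.pi : ℂ) ≠ 0 := by
    exact_mod_cast Real.pi_ne_zero
  have hI : Complex.I ≠ 0 := Complex.I_ne_zero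
  obtain ⟨m, hm⟩ : ∃ m : ℤ, k * (k - 1) = 2 * m := by
    rcases Int.even_mul_pred_self k with ⟨m, hm⟩
    exact ⟨m, by omega⟩
  have key : L₂ ^ 2 / (4 * (Real.pi : ℂ) * Complex.I) - L₂ / 2 =
      (L₁ ^ 2 / (4 * (Real.pi : ℂ) * Complex.I) - L₁ / 2) + (k : ℂ) * L₁ +
        ((m : ℂ) * (2 * (Real.pi : ℂ) * Complex.I)) := by
    subst hk
    have hm' : (k : ℂ) * ((k : ℂ) - 1) = 2 * (m : ℂ) := by
      exact_mod_cast congrArg (Int.cast : ℤ → ℂ) hm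
    field_simp
    linear_combination (4 * (Real.pi : ℂ) * Complex.I * (Real.pi : ℂ) * Complex.I * 2) * hm'
  rw [key, Complex.exp_add, Complex.exp_add, Complex.exp_int_mul_two_pi_mul_I,
    mul_one]
  rw [Complex.exp_int_mul, h1]
  ring
end

section
/- Let ρ₁, ρ₂, ρ₀, c, ε be real numbers with 1 < ρ₂ < ρ₁⁻¹, ρ₁ρ₂⁻¹ < ρ₀ < ρ₁, ρ₀ < c < ρ₁, and 0 < ε < (ρ₀ − ρ₁ρ₂⁻¹)/2. Set a = ρ₂ − ε, b = c⁻¹ + ε, and A = {z ∈ ℂ : a ≤ |z| ≤ b}. Then for every complex number λ with c ≤ |λ| ≤ ρ₁ and every nonzero integer k, the sets λᵏ·A = {λᵏ·z : z ∈ A} and A are disjoint. -/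
/-- For `A = Δ[a,b]` with `a = ρ₂ − ε`, `b = c⁻¹ + ε`, the translates `λᵏ·A`
are disjoint from `A` for every `λ` with `c ≤ |λ| ≤ ρ₁` and every nonzero integer `k`. -/
theorem annulus_translates_disjoint (ρ₁ ρ₂ ρ₀ c ε : ℝ)
    (h1 : 1 < ρ₂) (h2 : ρ₂ < ρ₁⁻¹) (h3 : ρ₁ * ρ₂⁻¹ < ρ₀) (h4 : ρ₀ < ρ₁)
    (h5 : ρ₀ < c) (h6 : c < ρ₁) (h7 : 0 < ε) (h8 : ε < (ρ₀ - ρ₁ * ρ₂⁻¹) / 2)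
    (a b : ℝ) (ha : a = ρ₂ - ε) (hb : b = c⁻¹ + ε)
    (A : Set ℂ) (hA : A = {z : ℂ | a ≤ ‖z‖ ∧ ‖z‖ ≤ b}) :
    ∀ lam : ℂ, c ≤ ‖lam‖ → ‖lam‖ ≤ ρ₁ →
      ∀ k : ℤ, k ≠ 0 → Disjoint ((fun z => lam ^ k * z) '' A) A := by
  -- basic positivity facts
  have hρ₁0 : 0 < ρ₁ := by
    by_contra h
    push_neg at h
    have : ρ₁⁻¹ ≤ 0 := inv_nonpos.mpr h
    linarith
  have hρ₁1 : ρ₁ < 1 := by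
    have h1' : 1 < ρ₁⁻¹ := lt_trans h1 h2
    have := (one_lt_inv_iff₀).mp h1'
    exact this.2
  have hρ₂0 : (0:ℝ) < ρ₂ := by linarith
  have hρ₂inv : 0 < ρ₂⁻¹ := inv_pos.mpr hρ₂0
  have hρ₀0 : 0 < ρ₀ := lt_trans (by positivity) h3
  have hc0 : 0 < c := lt_trans hρ₀0 h5
  have hcinv : 0 < c⁻¹ := inv_pos.mpr hc0
  have hb0 : 0 < b := by rw [hb]; positivity
  have ha0 : 0 < a := by
    have : ε < 1 / 2 := by
      have : ρ₁ * ρ₂⁻¹ > 0 := by positivity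
      nlinarith
    rw [ha]; linarith
  -- the key inequality: ρ₁ * b < a
  have hkey : ρ₁ * b < a := by
    have hc : c * c⁻¹ = 1 := mul_inv_cancel₀ (ne_of_gt hc0)
    have hρ₂c : ρ₂ * ρ₂⁻¹ = 1 := mul_inv_cancel₀ (ne_of_gt hρ₂0)
    -- step 1: ρ₁ * c⁻¹ < ρ₁ / ρ₀
    have s1 : ρ₁ * c⁻¹ < ρ₁ / ρ₀ := by
      rw [div_eq_mul_inv]
      have := inv_strictAnti₀ hρ₀0 h5
      exact mul_lt_mul_of_pos_left this hρ₁0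
    -- step 2: ρ₁ / ρ₀ < ρ₂ + ρ₁ * ρ₂⁻¹ - ρ₀
    have s2 : ρ₁ / ρ₀ < ρ₂ + ρ₁ * ρ₂⁻¹ - ρ₀ := by
      rw [div_lt_iff₀ hρ₀0]
      have hfac : 0 < (ρ₂ - ρ₀) * (ρ₀ * ρ₂ - ρ₁) := by
        have h3' : ρ₁ < ρ₀ * ρ₂ := by nlinarith [hρ₂c]
        have : ρ₀ < ρ₂ := by linarith
        nlinarith
      nlinarith [hρ₂c]
    have hεb : ρ₁ * ε ≤ ε := by nlinarith
    have h8' : 2 * ε < ρ₀ - ρ₁ * ρ₂⁻¹ := by linarith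
    rw [hb, ha, mul_add]
    nlinarith
  -- main argument
  intro lam hlc hlρ k hk
  rw [Set.disjoint_left]
  rintro x ⟨z, hzA, rfl⟩ hxA
  rw [hA] at hzA hxA
  simp only [Set.mem_setOf_eq] at hzA hxA
  set r := ‖lam‖ with hr
  have hr0 : 0 < r := lt_of_lt_of_le hc0 hlc
  have hr1 : r < 1 := lt_of_le_of_lt hlρ hρ₁1
  have habs : ‖lam ^ k * z‖ = r ^ k * ‖z‖ := by
    rw [norm_mul, norm_zpow]
  have hz0 : (0:ℝ) ≤ ‖z‖ := norm_nonneg z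
  rcases lt_or_gt_of_ne hk with hkneg | hkpos
  · -- k < 0 : |lam^k z| ≥ ρ₁⁻¹ * a > b
    obtain ⟨n, hn⟩ := Int.eq_ofNat_of_zero_le (le_of_lt (neg_pos.mpr hkneg))
    have hkn : k = -(n : ℤ) := by omega
    have hn1 : 1 ≤ n := by omega
    have hpow : r ^ (n:ℕ) ≤ ρ₁ := by
      calc r ^ (n:ℕ) ≤ r ^ 1 := pow_le_pow_of_le_one (le_of_lt hr0) (le_of_lt hr1) hn1
        _ = r := pow_one r
        _ ≤ ρ₁ := hlρ
    have hpow0 : 0 < r ^ (n:ℕ) := pow_pos hr0 n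
    have hrk : ρ₁⁻¹ ≤ r ^ k := by
      rw [hkn, zpow_neg, zpow_natCast]
      exact inv_anti₀ hpow0 hpow
    have h1' : ρ₁⁻¹ * a ≤ r ^ k * ‖z‖ :=
      mul_le_mul hrk hzA.1 (le_of_lt ha0) (le_trans (le_of_lt (inv_pos.mpr hρ₁0)) hrk)
    have h2' : b < ρ₁⁻¹ * a := by
      rw [← div_eq_inv_mul, lt_div_iff₀ hρ₁0]
      linarith [hkey]
    have := hxA.2
    rw [habs] at this
    linarith
  · -- k > 0 : |lam^k z| ≤ ρ₁ * b < a
    obtain ⟨n, rfl⟩ := Int.eq_ofNat_of_zero_le (le_of_lt hkpos)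
    have hn1 : 1 ≤ n := by exact_mod_cast hkpos
    have hpow : r ^ (n:ℕ) ≤ ρ₁ := by
      calc r ^ (n:ℕ) ≤ r ^ 1 := pow_le_pow_of_le_one (le_of_lt hr0) (le_of_lt hr1) hn1
        _ = r := pow_one r
        _ ≤ ρ₁ := hlρ
    have h1' : r ^ (n:ℤ) * ‖z‖ ≤ ρ₁ * b := by
      rw [zpow_natCast]
      exact mul_le_mul hpow hzA.2 hz0 (le_of_lt hρ₁0)
    have := hxA.1
    rw [habs] at this
    linarith
end
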